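/- The operadic insertion is a well-defined Lie algebra homomorphism: for finite types A, B and a fixed element a ∈ A, there exists a Lie algebra homomorphism ∘_a : t̃_A × t̃_B → t̃_C, where C = {x ∈ A | x ≠ a} ⊕ B (the disjoint union of A minus a with B) and t̃_A × t̃_B carries the product Lie algebra structure, determined on the classes of the generators by: ∘_a(t_{xy}, 0) = t_{xy} and ∘_a(s_x, 0) = s_x for x, y ∈ A − {a}; ∘_a(0, t_{xy}) = t_{xy} and ∘_a(0, s_x) = s_x for x, y ∈ B; ∘_a(t_{ax}, 0) = Σ_{y ∈ B} t_{xy} for x ∈ A − {a}; and ∘_a(s_a, 0) = Σ_{x ∈ B} s_x + Σ_{{x,y} ⊆ B, x ≠ y} t_{xy} (sum over unordered pairs). -/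

import Mathlib

/-! The extended Drinfeld–Kohno Lie algebras `t̃_A` over ℚ and their operadic
insertion homomorphisms. -/

/-- Generators `t_{ab}` (for `a ≠ b`) and `s_a` of the extended Drinfeld–Kohno
Lie algebra `t̃_A`. -/
inductive ExtGen (A : Type) : Type
  | t : (a b : A) → a ≠ b → ExtGen A
  | s : A → ExtGen A

open FreeLieAlgebra in
/-- The defining relations of `t̃_A`: the infinitesimal braid relations on the `t`'s
together with the centrality of the `s_a`. -/
def extRels (A : Type) : Set (FreeLieAlgebra ℚ (ExtGen A)) :=
  {x | ∃ (a b : A) (h : a ≠ b),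
      x = of ℚ (ExtGen.t a b h) - of ℚ (ExtGen.t b a h.symm)} ∪
  {x | ∃ (a b c d : A) (h₁ : a ≠ b) (h₂ : c ≠ d),
      a ≠ c ∧ a ≠ d ∧ b ≠ c ∧ b ≠ d ∧
      x = ⁅of ℚ (ExtGen.t a b h₁), of ℚ (ExtGen.t c d h₂)⁆} ∪
  {x | ∃ (a b c : A) (hab : a ≠ b) (hbc : b ≠ c) (hac : a ≠ c),
      x = ⁅of ℚ (ExtGen.t a c hac), of ℚ (ExtGen.t a b hab) + of ℚ (ExtGen.t b c hbc)⁆} ∪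
  {x | ∃ (a : A) (g : ExtGen A), x = ⁅of ℚ (ExtGen.s a), of ℚ g⁆}

/-- The Lie ideal generated by the relations of `t̃_A`. -/
noncomputable def extIdeal (A : Type) : LieIdeal ℚ (FreeLieAlgebra ℚ (ExtGen A)) :=
  LieSubmodule.lieSpan ℚ _ (extRels A)

/-- The extended Drinfeld–Kohno Lie algebra `t̃_A`. -/
abbrev DKtTilde (A : Type) := FreeLieAlgebra ℚ (ExtGen A) ⧸ extIdeal A

/-- The class of the generator `t_{ab}` in `t̃_A`. -/
noncomputable def ttcl {A : Type} (a b : A) (h : a ≠ b) : DKtTilde A :=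
  LieSubmodule.Quotient.mk (N := extIdeal A) (FreeLieAlgebra.of ℚ (ExtGen.t a b h))

/-- The class of the generator `s_a` in `t̃_A`. -/
noncomputable def scl {A : Type} (a : A) : DKtTilde A :=
  LieSubmodule.Quotient.mk (N := extIdeal A) (FreeLieAlgebra.of ℚ (ExtGen.s a))

theorem ttcl_symm {A : Type} (a b : A) (h : a ≠ b) : ttcl a b h = ttcl b a h.symm := by
  refine (Submodule.Quotient.eq _).mpr ?_
  exact LieSubmodule.subset_lieSpan (Or.inl (Or.inl (Or.inl ⟨a, b, h, rfl⟩)))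

section ProdLie

variable {L M : Type} [LieRing L] [LieRing M]

/-- Componentwise bracket on a product. -/
instance Prod.instLieRingBracket : Bracket (L × M) (L × M) :=
  ⟨fun x y => (⁅x.1, y.1⁆, ⁅x.2, y.2⁆)⟩

@[simp] theorem Prod.bracket_def (x y : L × M) :
    ⁅x, y⁆ = (⁅x.1, y.1⁆, ⁅x.2, y.2⁆) := rfl

/-- The product of two Lie rings, with componentwise bracket. -/
instance Prod.instLieRing : LieRing (L × M) where
  add_lie x y z := by ext <;> simp
  lie_add x y z := by ext <;> simp
  lie_self x := by ext <;> simp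
  leibniz_lie x y z := by ext <;> simp

/-- The product of two Lie algebras. -/
instance Prod.instLieAlgebra (R : Type*) [CommRing R] [LieAlgebra R L] [LieAlgebra R M] :
    LieAlgebra R (L × M) where
  lie_smul t x y := by ext <;> simp

end ProdLie

/-- The image in `t̃_C` of an unordered pair of elements of `B` under an injection
`e : B → C`: the unordered pair `{x, y}` (with `x ≠ y`) is sent to the class of
`t_{e x, e y}`, and diagonal pairs are sent to `0`.  Well defined thanks to the
relation `t_{ab} = t_{ba}`. -/
noncomputable def ttclPairMap {B C : Type} [DecidableEq B] (e : B → C)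
    (he : Function.Injective e) : Sym2 B → DKtTilde C :=
  Sym2.lift ⟨fun x y => if h : x ≠ y then ttcl (e x) (e y) (fun hh => h (he hh)) else 0, by
    intro x y
    by_cases h : x = y
    · subst h; rfl
    · simp only [dif_pos h, dif_pos (Ne.symm h)]
      exact ttcl_symm _ _ _⟩

/-- `Σ_{{x,y} ⊆ B, x ≠ y} t_{e x, e y}` in `t̃_C`, the sum running over unordered
pairs of distinct elements of `B`. -/
noncomputable def pairSum {B C : Type} [Fintype B] [DecidableEq B] (e : B → C)
    (he : Function.Injective e) : DKtTilde C :=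
  ∑ p ∈ Finset.univ.filter (fun p : Sym2 B => ¬ p.IsDiag), ttclPairMap e he p

/-- The operadic insertion `∘_a : t̃_A × t̃_B → t̃_{(A−{a}) ⊔ B}` is the (unique) Lie
algebra homomorphism from the product Lie algebra satisfying these equations on the
classes of the generators. -/
def IsInsertion (A B : Type) [Fintype B] [DecidableEq B] (a : A)
    (f : DKtTilde A × DKtTilde B →ₗ⁅ℚ⁆ DKtTilde ({x : A // x ≠ a} ⊕ B)) : Prop :=
  (∀ (x y : A) (hx : x ≠ a) (hy : y ≠ a) (hxy : x ≠ y),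
      f (ttcl x y hxy, 0) =
        ttcl (Sum.inl ⟨x, hx⟩) (Sum.inl ⟨y, hy⟩)
          (fun h => hxy (congrArg Subtype.val (Sum.inl_injective h)))) ∧
  (∀ (x : A) (hx : x ≠ a), f (scl x, 0) = scl (Sum.inl ⟨x, hx⟩)) ∧
  (∀ (x y : B) (hxy : x ≠ y),
      f (0, ttcl x y hxy) =
        ttcl (Sum.inr x) (Sum.inr y) (fun h => hxy (Sum.inr_injective h))) ∧
  (∀ x : B, f (0, scl x) = scl (Sum.inr x)) ∧
  (∀ (x : A) (hx : x ≠ a) (hax : a ≠ x),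
      f (ttcl a x hax, 0) =
        ∑ y : B, ttcl (Sum.inl ⟨x, hx⟩) (Sum.inr y) (fun h => by cases h)) ∧
  (f (scl a, 0) = (∑ x : B, scl (Sum.inr x)) +
      pairSum (Sum.inr : B → {x : A // x ≠ a} ⊕ B) Sum.inr_injective)

section Infra

open FreeLieAlgebra

variable {C : Type}

lemma rel_mem_ideal {x : FreeLieAlgebra ℚ (ExtGen C)} (hx : x ∈ extRels C) :
    (LieSubmodule.Quotient.mk (N := extIdeal C) x) = 0 :=
  (LieSubmodule.Quotient.mk_eq_zero').mpr (LieSubmodule.subset_lieSpan hx)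

lemma tt_comm {a b c d : C} (h1 : a ≠ b) (h2 : c ≠ d) (hac : a ≠ c) (had : a ≠ d)
    (hbc : b ≠ c) (hbd : b ≠ d) : ⁅ttcl a b h1, ttcl c d h2⁆ = 0 := by
  have := rel_mem_ideal (C := C)
    (Or.inl (Or.inl (Or.inr ⟨a, b, c, d, h1, h2, hac, had, hbc, hbd, rfl⟩)))
  rwa [LieSubmodule.Quotient.mk_bracket] at this

/-- The quotient map as a Lie algebra homomorphism. -/
noncomputable def mkHom (C : Type) : FreeLieAlgebra ℚ (ExtGen C) →ₗ⁅ℚ⁆ DKtTilde C :=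
  { (extIdeal C).toSubmodule.mkQ with
    map_lie' := fun {x y} => LieSubmodule.Quotient.mk_bracket _ x y }

@[simp] lemma mkHom_apply (x : FreeLieAlgebra ℚ (ExtGen C)) :
    mkHom C x = LieSubmodule.Quotient.mk (N := extIdeal C) x := rfl

lemma tt_rel3 {a b c : C} (hab : a ≠ b) (hbc : b ≠ c) (hac : a ≠ c) :
    ⁅ttcl a c hac, ttcl a b hab + ttcl b c hbc⁆ = 0 := by
  have := rel_mem_ideal (C := C) (Or.inl (Or.inr ⟨a, b, c, hab, hbc, hac, rfl⟩))
  have e : ∀ x y : FreeLieAlgebra ℚ (ExtGen C),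
      (LieSubmodule.Quotient.mk (N := extIdeal C) (x + y) : DKtTilde C) =
        LieSubmodule.Quotient.mk x + LieSubmodule.Quotient.mk y := fun x y =>
    (mkHom C).toLinearMap.map_add x y
  rwa [LieSubmodule.Quotient.mk_bracket, e] at this

/-- Right centralizer. -/
def centra {L : Type} [LieRing L] [LieAlgebra ℚ L] (z : L) : LieSubalgebra ℚ L where
  carrier := {x | ⁅x, z⁆ = 0}
  add_mem' := fun {x y} hx hy => by
    simp only [Set.mem_setOf_eq, add_lie] at *; rw [hx, hy, add_zero]
  zero_mem' := by simp
  smul_mem' := fun t x hx => by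
    simp only [Set.mem_setOf_eq, smul_lie] at *; rw [hx, smul_zero]
  lie_mem' := fun {x y} hx hy => by
    simp only [Set.mem_setOf_eq] at *; rw [lie_lie, hx, hy]; simp

/-- Left centralizer. -/
def centraL {L : Type} [LieRing L] [LieAlgebra ℚ L] (z : L) : LieSubalgebra ℚ L where
  carrier := {x | ⁅z, x⁆ = 0}
  add_mem' := fun {x y} hx hy => by
    simp only [Set.mem_setOf_eq, lie_add] at *; rw [hx, hy, add_zero]
  zero_mem' := by simp
  smul_mem' := fun t x hx => by
    simp only [Set.mem_setOf_eq, lie_smul] at *; rw [hx, smul_zero]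
  lie_mem' := fun {x y} hx hy => by
    simp only [Set.mem_setOf_eq] at *; rw [leibniz_lie, hx, hy]; simp

/-- A Lie subalgebra of the free Lie algebra containing all generators is everything. -/
lemma mem_of_forall_of {X : Type} (K : LieSubalgebra ℚ (FreeLieAlgebra ℚ X))
    (hK : ∀ x, FreeLieAlgebra.of ℚ x ∈ K) (y : FreeLieAlgebra ℚ X) : y ∈ K := by
  let f : FreeLieAlgebra ℚ X →ₗ⁅ℚ⁆ K :=
    FreeLieAlgebra.lift ℚ (fun x => (⟨FreeLieAlgebra.of ℚ x, hK x⟩ : K))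
  have h : K.incl.comp f = LieHom.id := by
    apply FreeLieAlgebra.hom_ext
    intro x
    simp [f, FreeLieAlgebra.lift_of_apply]
  have h2 : K.incl (f y) = y := by rw [← LieHom.comp_apply, h]; rfl
  rw [← h2]
  exact (f y).2

/-- `s_c` is central in `t̃_C`. -/
lemma scl_central (c : C) (w : DKtTilde C) : ⁅scl c, w⁆ = 0 := by
  obtain ⟨x, rfl⟩ := Submodule.Quotient.mk_surjective (extIdeal C).toSubmodule w
  have : (x : FreeLieAlgebra ℚ (ExtGen C)) ∈ (centraL (scl c)).comap (mkHom C) := by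
    apply mem_of_forall_of
    intro g
    show ⁅scl c, mkHom C (FreeLieAlgebra.of ℚ g)⁆ = 0
    have := rel_mem_ideal (C := C) (Or.inr ⟨c, g, rfl⟩)
    rwa [LieSubmodule.Quotient.mk_bracket] at this
  exact this

lemma lie_scl_zero (c : C) (w : DKtTilde C) : ⁅w, scl c⁆ = 0 := by
  rw [← lie_skew, scl_central, neg_zero]

end Infra
section Infra2

open FreeLieAlgebra

/-- Lift a Lie algebra homomorphism killing the relations through the quotient. -/
noncomputable def quotLift {X : Type} {L : Type} [LieRing L] [LieAlgebra ℚ L]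
    (F : FreeLieAlgebra ℚ (ExtGen X) →ₗ⁅ℚ⁆ L) (hF : ∀ r ∈ extRels X, F r = 0) :
    DKtTilde X →ₗ⁅ℚ⁆ L :=
  { Submodule.liftQ (extIdeal X).toSubmodule F.toLinearMap (by
      have hle : extIdeal X ≤ F.ker :=
        (LieSubmodule.lieSpan_le).mpr (fun r hr => LieHom.mem_ker.mpr (hF r hr))
      intro x hx
      exact LieHom.mem_ker.mp (hle hx)) with
    map_lie' := by
      rintro x y
      obtain ⟨x, rfl⟩ := Submodule.Quotient.mk_surjective (extIdeal X).toSubmodule x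
      obtain ⟨y, rfl⟩ := Submodule.Quotient.mk_surjective (extIdeal X).toSubmodule y
      show Submodule.liftQ _ _ _ ⁅LieSubmodule.Quotient.mk (N := extIdeal X) x,
        LieSubmodule.Quotient.mk (N := extIdeal X) y⁆ = _
      rw [← LieSubmodule.Quotient.mk_bracket]
      show F ⁅x, y⁆ = ⁅F x, F y⁆
      exact F.map_lie x y }

@[simp] lemma quotLift_mk {X : Type} {L : Type} [LieRing L] [LieAlgebra ℚ L]
    (F : FreeLieAlgebra ℚ (ExtGen X) →ₗ⁅ℚ⁆ L) (hF : ∀ r ∈ extRels X, F r = 0)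
    (x : FreeLieAlgebra ℚ (ExtGen X)) :
    quotLift F hF (LieSubmodule.Quotient.mk (N := extIdeal X) x) = F x := rfl

/-- Combine two Lie algebra homomorphisms with commuting images into one from the product. -/
noncomputable def combine {L M N : Type} [LieRing L] [LieAlgebra ℚ L] [LieRing M]
    [LieAlgebra ℚ M] [LieRing N] [LieAlgebra ℚ N]
    (F : L →ₗ⁅ℚ⁆ N) (G : M →ₗ⁅ℚ⁆ N) (h : ∀ x y, ⁅F x, G y⁆ = 0) :
    L × M →ₗ⁅ℚ⁆ N :=
  { F.toLinearMap.comp (LinearMap.fst ℚ L M) + G.toLinearMap.comp (LinearMap.snd ℚ L M) with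
    map_lie' := by
      rintro ⟨x₁, x₂⟩ ⟨y₁, y₂⟩
      show F ⁅x₁, y₁⁆ + G ⁅x₂, y₂⁆ = ⁅F x₁ + G x₂, F y₁ + G y₂⁆
      have h2 : ⁅G x₂, F y₁⁆ = 0 := by rw [← lie_skew, h, neg_zero]
      rw [lie_add, add_lie, add_lie, h x₁ y₂, h2, F.map_lie, G.map_lie]
      abel }

@[simp] lemma combine_apply {L M N : Type} [LieRing L] [LieAlgebra ℚ L] [LieRing M]
    [LieAlgebra ℚ M] [LieRing N] [LieAlgebra ℚ N]
    (F : L →ₗ⁅ℚ⁆ N) (G : M →ₗ⁅ℚ⁆ N) (h : ∀ x y, ⁅F x, G y⁆ = 0) (x : L × M) :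
    combine F G h x = F x.1 + G x.2 := rfl

end Infra2
section PairSum

lemma sum_lie' {L : Type} [LieRing L] {ι : Type*} (s : Finset ι) (f : ι → L) (y : L) :
    ⁅∑ i ∈ s, f i, y⁆ = ∑ i ∈ s, ⁅f i, y⁆ := by
  induction s using Finset.cons_induction with
  | empty => simp
  | cons a s ha ih => simp [Finset.sum_cons, add_lie, ih]

lemma lie_sum' {L : Type} [LieRing L] {ι : Type*} (s : Finset ι) (f : ι → L) (y : L) :
    ⁅y, ∑ i ∈ s, f i⁆ = ∑ i ∈ s, ⁅y, f i⁆ := by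
  induction s using Finset.cons_induction with
  | empty => simp
  | cons a s ha ih => simp [Finset.sum_cons, lie_add, ih]

variable {B C : Type} [Fintype B] [DecidableEq B]

omit [Fintype B] in
lemma ttclPairMap_mk (e : B → C) (he : Function.Injective e) (p q : B) (h : p ≠ q) :
    ttclPairMap e he (Sym2.mk p q) = ttcl (e p) (e q) (fun hh => h (he hh)) := by
  simp only [ttclPairMap, Sym2.lift_mk]
  exact dif_pos h

lemma offDiag_image :
    (Finset.univ.offDiag (α := B)).image (Function.uncurry Sym2.mk)
      = Finset.univ.filter (fun p : Sym2 B => ¬ p.IsDiag) := by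
  ext z
  constructor
  · intro hz
    obtain ⟨a, ha, rfl⟩ := Finset.mem_image.mp hz
    refine Finset.mem_filter.mpr ⟨Finset.mem_univ _, fun h => ?_⟩
    exact (Finset.mem_offDiag.mp ha).2.2 ((Sym2.mk_isDiag_iff (x := a.1) (y := a.2)).mp h)
  · intro hz
    induction z using Sym2.inductionOn with
    | hf u v =>
      have huv : u ≠ v := fun h => (Finset.mem_filter.mp hz).2 (Sym2.mk_isDiag_iff.mpr h)
      exact Finset.mem_image.mpr
        ⟨(u, v), Finset.mem_offDiag.mpr ⟨Finset.mem_univ _, Finset.mem_univ _, huv⟩, rfl⟩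

lemma fiber_card (z : Sym2 B) (hz : ¬ z.IsDiag) :
    ((Finset.univ.offDiag (α := B)).filter (fun a => Function.uncurry Sym2.mk a = z)).card = 2 := by
  induction z using Sym2.inductionOn with
  | hf u v =>
    have huv : u ≠ v := fun h => hz (Sym2.mk_isDiag_iff.mpr h)
    have hset : (Finset.univ.offDiag (α := B)).filter (fun a => Function.uncurry Sym2.mk a = Sym2.mk u v)
        = {(u, v), (v, u)} := by
      ext a
      constructor
      · intro h
        obtain ⟨ha, heq⟩ := Finset.mem_filter.mp h
        rcases (Sym2.mk_eq_mk_iff (p := a) (q := (u, v))).mp heq with h' | h'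
        · exact Finset.mem_insert.mpr (Or.inl h')
        · exact Finset.mem_insert.mpr (Or.inr (Finset.mem_singleton.mpr h'))
      · intro h
        rcases Finset.mem_insert.mp h with rfl | h'
        · exact Finset.mem_filter.mpr
            ⟨Finset.mem_offDiag.mpr ⟨Finset.mem_univ _, Finset.mem_univ _, huv⟩, rfl⟩
        · rw [Finset.mem_singleton.mp h']
          exact Finset.mem_filter.mpr
            ⟨Finset.mem_offDiag.mpr ⟨Finset.mem_univ _, Finset.mem_univ _, huv.symm⟩,
              (Sym2.mk_eq_mk_iff (p := (v, u)) (q := (u, v))).mpr (Or.inr rfl)⟩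
    rw [hset]
    rw [Finset.card_insert_of_notMem (by simp [Prod.ext_iff, huv]), Finset.card_singleton]

lemma lie_pairSum (e : B → C) (he : Function.Injective e) (X : DKtTilde C) :
    (2 : ℚ) • ⁅pairSum e he, X⁆ =
      ∑ p : B, ∑ q : B,
        (if h : p ≠ q then ⁅ttcl (e p) (e q) (fun hh => h (he hh)), X⁆ else 0) := by
  classical
  have step1 : (2 : ℚ) • ⁅pairSum e he, X⁆
      = ∑ z ∈ Finset.univ.filter (fun p : Sym2 B => ¬ p.IsDiag),
          (2 : ℕ) • ⁅ttclPairMap e he z, X⁆ := by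
    rw [pairSum, sum_lie', Finset.smul_sum]
    refine Finset.sum_congr rfl (fun z _ => ?_)
    rw [two_smul, two_nsmul]
  have step2 : ∑ a ∈ Finset.univ.offDiag (α := B), ⁅ttclPairMap e he (Function.uncurry Sym2.mk a), X⁆
      = ∑ z ∈ Finset.univ.filter (fun p : Sym2 B => ¬ p.IsDiag),
          (2 : ℕ) • ⁅ttclPairMap e he z, X⁆ := by
    rw [Finset.sum_comp (fun z => ⁅ttclPairMap e he z, X⁆) (Function.uncurry Sym2.mk), offDiag_image]
    refine Finset.sum_congr rfl (fun z hz => ?_)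
    have hz' : ¬ z.IsDiag := (Finset.mem_filter.mp hz).2
    rw [fiber_card z hz']
  rw [step1, ← step2]
  have hzero : ∀ x ∈ (Finset.univ : Finset (B × B)), x ∉ Finset.univ.offDiag (α := B) →
      (if h : x.1 ≠ x.2 then ⁅ttcl (e x.1) (e x.2) (fun hh => h (he hh)), X⁆ else 0) = 0 := by
    intro x _ hx
    have h : ¬ x.1 ≠ x.2 := by
      intro h
      exact hx (Finset.mem_offDiag.mpr ⟨Finset.mem_univ _, Finset.mem_univ _, h⟩)
    rw [dif_neg h]
  have step3 : ∑ a : B × B,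
        (if h : a.1 ≠ a.2 then ⁅ttcl (e a.1) (e a.2) (fun hh => h (he hh)), X⁆ else 0)
      = ∑ a ∈ Finset.univ.offDiag (α := B), ⁅ttclPairMap e he (Function.uncurry Sym2.mk a), X⁆ := by
    rw [← Finset.sum_subset (Finset.subset_univ (Finset.univ.offDiag (α := B))) hzero]
    refine Finset.sum_congr rfl (fun a ha => ?_)
    have h : a.1 ≠ a.2 := (Finset.mem_offDiag.mp ha).2.2
    rw [dif_pos h]
    have : Function.uncurry Sym2.mk a = Sym2.mk a.1 a.2 := rfl
    rw [this, ttclPairMap_mk e he a.1 a.2 h]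
  rw [← step3, Fintype.sum_prod_type]

lemma lie_pairSum_eq_zero (e : B → C) (he : Function.Injective e) (X : DKtTilde C)
    (h : ∑ p : B, ∑ q : B,
        (if h : p ≠ q then ⁅ttcl (e p) (e q) (fun hh => h (he hh)), X⁆ else 0) = 0) :
    ⁅pairSum e he, X⁆ = 0 := by
  have h2 := lie_pairSum e he X
  rw [h] at h2
  have h3 : ⁅pairSum e he, X⁆ = ((2:ℚ)⁻¹ * 2) • ⁅pairSum e he, X⁆ := by norm_num
  rw [h3, mul_smul, h2, smul_zero]

end PairSum
section HLemmas

variable {B C : Type} [Fintype B] [DecidableEq B]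

private lemma hee {e : B → C} (he : Function.Injective e) {p q : B} (h : p ≠ q) :
    e p ≠ e q := fun hh => h (he hh)

lemma H_outer (e : B → C) (he : Function.Injective e) (u v : C) (hu : ∀ b, u ≠ e b) (hv : ∀ b, v ≠ e b) (huv : u ≠ v) :
    ⁅pairSum e he, ttcl u v huv⁆ = 0 := by
  apply lie_pairSum_eq_zero
  refine Finset.sum_eq_zero (fun p _ => Finset.sum_eq_zero (fun q _ => ?_))
  by_cases h : p ≠ q
  · rw [dif_pos h]
    exact tt_comm _ _ (hu p).symm (hv p).symm (hu q).symm (hv q).symm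
  · rw [dif_neg h]

lemma H4 (e : B → C) (he : Function.Injective e) (w : C) (hw : ∀ b, w ≠ e b) :
    ⁅pairSum e he, ∑ b : B, ttcl w (e b) (hw b)⁆ = 0 := by
  apply lie_pairSum_eq_zero
  refine Finset.sum_eq_zero (fun p _ => Finset.sum_eq_zero (fun q _ => ?_))
  by_cases h : p ≠ q
  · rw [dif_pos h, lie_sum']
    have hz : ∀ b ∈ (Finset.univ : Finset B), b ∉ ({p, q} : Finset B) →
        ⁅ttcl (e p) (e q) (fun hh => h (he hh)), ttcl w (e b) (hw b)⁆ = 0 := by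
      intro b _ hb
      simp only [Finset.mem_insert, Finset.mem_singleton] at hb
      push_neg at hb
      exact tt_comm _ _ (hw p).symm (hee he (Ne.symm hb.1)) (hw q).symm
        (hee he (Ne.symm hb.2))
    rw [← Finset.sum_subset (Finset.subset_univ ({p, q} : Finset B)) hz,
      Finset.sum_pair h, ← lie_add]
    rw [ttcl_symm w (e p) (hw p)]
    exact tt_rel3 _ _ _
  · rw [dif_neg h]

lemma H5 (e : B → C) (he : Function.Injective e) (u v : B) (huv : u ≠ v) :
    ⁅pairSum e he, ttcl (e u) (e v) (fun hh => huv (he hh))⁆ = 0 := by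
  classical
  apply lie_pairSum_eq_zero
  set T := ttcl (e u) (e v) (fun hh => huv (he hh)) with hT
  set G : B → B → DKtTilde C := fun p q =>
    if h : p ≠ q then ⁅ttcl (e p) (e q) (fun hh => h (he hh)), T⁆ else 0 with hG
  show ∑ p : B, ∑ q : B, G p q = 0
  have rowz : ∀ p : B, p ∉ ({u, v} : Finset B) → ∑ q : B, G p q = 0 := by
    intro p hp
    simp only [Finset.mem_insert, Finset.mem_singleton] at hp
    push_neg at hp
    have hz : ∀ q ∈ (Finset.univ : Finset B), q ∉ ({u, v} : Finset B) → G p q = 0 := by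
      intro q _ hq
      simp only [Finset.mem_insert, Finset.mem_singleton] at hq
      push_neg at hq
      by_cases h : p ≠ q
      · rw [hG]; dsimp only; rw [dif_pos h]
        exact tt_comm _ _ (hee he hp.1) (hee he hp.2) (hee he hq.1) (hee he hq.2)
      · rw [hG]; dsimp only; rw [dif_neg h]
    rw [← Finset.sum_subset (Finset.subset_univ ({u, v} : Finset B)) hz,
      Finset.sum_pair huv]
    rw [hG]; dsimp only
    rw [dif_pos hp.1, dif_pos hp.2, ← add_lie, ← lie_skew, hT]
    rw [ttcl_symm (e p) (e u) _]
    have := tt_rel3 (a := e u) (b := e p) (c := e v)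
      (hee he hp.1.symm) (hee he hp.2) (hee he huv)
    rw [this, neg_zero]
  have rowuv : (∑ q : B, G u q) + (∑ q : B, G v q) = 0 := by
    rw [← Finset.sum_add_distrib]
    refine Finset.sum_eq_zero (fun q _ => ?_)
    by_cases hqu : q = u
    · subst hqu
      rw [hG]; dsimp only
      rw [dif_neg (by simp), dif_pos huv.symm, zero_add, hT]
      rw [ttcl_symm (e v) (e q) _]
      exact lie_self _
    · by_cases hqv : q = v
      · subst hqv
        rw [hG]; dsimp only
        rw [dif_pos huv, dif_neg (by simp), add_zero, hT]
        exact lie_self _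
      · rw [hG]; dsimp only
        rw [dif_pos (Ne.symm hqu), dif_pos (Ne.symm hqv), ← add_lie, ← lie_skew, hT]
        rw [ttcl_symm (e v) (e q) _]
        have := tt_rel3 (a := e u) (b := e q) (c := e v)
          (hee he (Ne.symm hqu)) (hee he hqv) (hee he huv)
        rw [this, neg_zero]
  have hsplit := Finset.sum_sdiff (f := fun p => ∑ q : B, G p q)
    (Finset.subset_univ ({u, v} : Finset B))
  rw [← hsplit, Finset.sum_pair huv, rowuv, add_zero]
  exact Finset.sum_eq_zero (fun p hp => rowz p (Finset.mem_sdiff.mp hp).2)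

lemma H6 (e : B → C) (he : Function.Injective e) (w : C) (hw : ∀ b, w ≠ e b) (u v : B) (huv : u ≠ v) :
    ⁅∑ b : B, ttcl w (e b) (hw b), ttcl (e u) (e v) (fun hh => huv (he hh))⁆ = 0 := by
  rw [sum_lie']
  have hz : ∀ b ∈ (Finset.univ : Finset B), b ∉ ({u, v} : Finset B) →
      ⁅ttcl w (e b) (hw b), ttcl (e u) (e v) (fun hh => huv (he hh))⁆ = 0 := by
    intro b _ hb
    simp only [Finset.mem_insert, Finset.mem_singleton] at hb
    push_neg at hb
    exact tt_comm _ _ (hw u) (hw v) (hee he hb.1) (hee he hb.2)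
  rw [← Finset.sum_subset (Finset.subset_univ ({u, v} : Finset B)) hz,
    Finset.sum_pair huv, ← add_lie, ← lie_skew]
  rw [ttcl_symm w (e u) (hw u)]
  have := tt_rel3 (a := e u) (b := w) (c := e v)
    (hw u).symm (hw v) (hee he huv)
  rw [this, neg_zero]

lemma H3a (e : B → C) (he : Function.Injective e) (u v : C) (hu : ∀ b, u ≠ e b) (hv : ∀ b, v ≠ e b) (huv : u ≠ v) :
    ⁅∑ b : B, ttcl v (e b) (hv b),
      (∑ b : B, ttcl u (e b) (hu b)) + ttcl u v huv⁆ = 0 := by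
  rw [lie_add, sum_lie', sum_lie', ← Finset.sum_add_distrib]
  refine Finset.sum_eq_zero (fun b _ => ?_)
  rw [lie_sum']
  have hin : ∀ b' ∈ (Finset.univ : Finset B), b' ≠ b →
      ⁅ttcl v (e b) (hv b), ttcl u (e b') (hu b')⁆ = 0 := by
    intro b' _ hb'
    exact tt_comm _ _ huv.symm (hv b') (hu b).symm (hee he (Ne.symm hb'))
  rw [Finset.sum_eq_single b hin (fun h => absurd (Finset.mem_univ b) h), ← lie_add]
  rw [ttcl_symm v (e b) (hv b), ttcl_symm u (e b) (hu b)]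
  exact tt_rel3 (hu b).symm huv (hv b).symm

lemma H3b (e : B → C) (u v : C) (hu : ∀ b, u ≠ e b) (hv : ∀ b, v ≠ e b) (huv : u ≠ v) :
    ⁅ttcl u v huv,
      (∑ b : B, ttcl u (e b) (hu b)) + ∑ b : B, ttcl v (e b) (hv b)⁆ = 0 := by
  rw [lie_add, lie_sum', lie_sum', ← Finset.sum_add_distrib]
  refine Finset.sum_eq_zero (fun b _ => ?_)
  rw [← lie_add, ttcl_symm v (e b) (hv b)]
  exact tt_rel3 _ _ _

lemma H3c (e : B → C) (he : Function.Injective e) (u v : C) (hu : ∀ b, u ≠ e b) (hv : ∀ b, v ≠ e b) (huv : u ≠ v) :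
    ⁅∑ b : B, ttcl u (e b) (hu b),
      ttcl u v huv + ∑ b : B, ttcl v (e b) (hv b)⁆ = 0 := by
  rw [lie_add, sum_lie', sum_lie', ← Finset.sum_add_distrib]
  refine Finset.sum_eq_zero (fun b _ => ?_)
  rw [lie_sum']
  have hin : ∀ b' ∈ (Finset.univ : Finset B), b' ≠ b →
      ⁅ttcl u (e b) (hu b), ttcl v (e b') (hv b')⁆ = 0 := by
    intro b' _ hb'
    exact tt_comm _ _ huv (hu b') (hv b).symm (hee he (Ne.symm hb'))
  rw [Finset.sum_eq_single b hin (fun h => absurd (Finset.mem_univ b) h), ← lie_add]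
  exact tt_rel3 _ _ _

end HLemmas
section Main

open FreeLieAlgebra

variable {A B : Type} [Fintype A] [Fintype B] [DecidableEq A] [DecidableEq B]

private lemma inlne {a : A} {x y : A} {hx : x ≠ a} {hy : y ≠ a} (hxy : x ≠ y) :
    (Sum.inl ⟨x, hx⟩ : {x : A // x ≠ a} ⊕ B) ≠ Sum.inl ⟨y, hy⟩ :=
  fun h => hxy (congrArg Subtype.val (Sum.inl_injective h))

/-- Image of the generators of `t̃_A` in `t̃_{(A−{a}) ⊔ B}`. -/
noncomputable def FA (a : A) : ExtGen A → DKtTilde ({x : A // x ≠ a} ⊕ B)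
  | .t x y hxy =>
    if hx : x = a then
      ∑ b : B, ttcl (Sum.inl ⟨y, fun h => hxy (hx.trans h.symm)⟩) (Sum.inr b) Sum.inl_ne_inr
    else if hy : y = a then
      ∑ b : B, ttcl (Sum.inl ⟨x, fun h => hxy (h.trans hy.symm)⟩) (Sum.inr b) Sum.inl_ne_inr
    else
      ttcl (Sum.inl ⟨x, hx⟩) (Sum.inl ⟨y, hy⟩) (inlne hxy)
  | .s x =>
    if hx : x = a then (∑ b : B, scl (Sum.inr b)) + pairSum Sum.inr Sum.inr_injective
    else scl (Sum.inl ⟨x, hx⟩)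

/-- Image of the generators of `t̃_B` in `t̃_{(A−{a}) ⊔ B}`. -/
noncomputable def GB (a : A) : ExtGen B → DKtTilde ({x : A // x ≠ a} ⊕ B)
  | .t x y h => ttcl (Sum.inr x) (Sum.inr y) (fun hh => h (Sum.inr_injective hh))
  | .s x => scl (Sum.inr x)

variable (a : A)

lemma FA_t_ne {x y : A} (hx : x ≠ a) (hy : y ≠ a) (hxy : x ≠ y) :
    FA a (ExtGen.t x y hxy) =
      ttcl (Sum.inl ⟨x, hx⟩) (Sum.inl ⟨y, hy⟩) (inlne (B := B) hxy) := by
  simp only [FA]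
  rw [dif_neg hx, dif_neg hy]

lemma FA_t_aL {x y : A} (hx : x = a) (hy : y ≠ a) (hxy : x ≠ y) :
    FA a (ExtGen.t x y hxy) =
      ∑ b : B, ttcl (Sum.inl ⟨y, hy⟩) (Sum.inr b) Sum.inl_ne_inr := by
  simp only [FA]
  rw [dif_pos hx]

lemma FA_t_aR {x y : A} (hx : x ≠ a) (hy : y = a) (hxy : x ≠ y) :
    FA a (ExtGen.t x y hxy) =
      ∑ b : B, ttcl (Sum.inl ⟨x, hx⟩) (Sum.inr b) Sum.inl_ne_inr := by
  simp only [FA]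
  rw [dif_neg hx, dif_pos hy]

lemma FA_s_ne {x : A} (hx : x ≠ a) :
    FA (B := B) a (ExtGen.s x) = scl (Sum.inl ⟨x, hx⟩) := by
  simp only [FA]
  rw [dif_neg hx]

lemma FA_s_a {x : A} (hx : x = a) :
    FA (B := B) a (ExtGen.s x) =
      (∑ b : B, scl (Sum.inr b)) + pairSum Sum.inr Sum.inr_injective := by
  simp only [FA]
  rw [dif_pos hx]

lemma FA_t_symm (x y : A) (hxy : x ≠ y) :
    FA (B := B) a (ExtGen.t x y hxy) = FA a (ExtGen.t y x hxy.symm) := by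
  by_cases hx : x = a
  · have hy : y ≠ a := fun h => hxy (hx.trans h.symm)
    rw [FA_t_aL a hx hy hxy, FA_t_aR a hy hx hxy.symm]
  · by_cases hy : y = a
    · rw [FA_t_aR a hx hy hxy, FA_t_aL a hy hx hxy.symm]
    · rw [FA_t_ne a hx hy hxy, FA_t_ne a hy hx hxy.symm]
      exact ttcl_symm _ _ _

/-- The sum-type bracket vanishing used for the commutation relations. -/
lemma HelperA (x r s : A) (hx : x ≠ a) (hr : r ≠ a) (hs : s ≠ a) (hxr : x ≠ r)
    (hxs : x ≠ s) (hrs : r ≠ s) :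
    ⁅∑ b : B, ttcl (Sum.inl ⟨x, hx⟩ : {x : A // x ≠ a} ⊕ B) (Sum.inr b) Sum.inl_ne_inr,
      ttcl (Sum.inl ⟨r, hr⟩ : {x : A // x ≠ a} ⊕ B) (Sum.inl ⟨s, hs⟩) (inlne hrs)⁆ = 0 := by
  rw [sum_lie']
  refine Finset.sum_eq_zero (fun b _ => ?_)
  exact tt_comm _ _ (inlne hxr) (inlne hxs) (Ne.symm Sum.inl_ne_inr)
    (Ne.symm Sum.inl_ne_inr)

/-- The lift of `FA` to the free Lie algebra. -/
noncomputable def F0 : FreeLieAlgebra ℚ (ExtGen A) →ₗ⁅ℚ⁆ DKtTilde ({x : A // x ≠ a} ⊕ B) :=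
  FreeLieAlgebra.lift ℚ (FA a)

/-- The lift of `GB` to the free Lie algebra. -/
noncomputable def G0 : FreeLieAlgebra ℚ (ExtGen B) →ₗ⁅ℚ⁆ DKtTilde ({x : A // x ≠ a} ⊕ B) :=
  FreeLieAlgebra.lift ℚ (GB a)

@[simp] lemma F0_of (g : ExtGen A) : F0 (B := B) a (of ℚ g) = FA a g :=
  FreeLieAlgebra.lift_of_apply _ _

@[simp] lemma G0_of (g : ExtGen B) : G0 (A := A) a (of ℚ g) = GB a g :=
  FreeLieAlgebra.lift_of_apply _ _

lemma G_rels : ∀ r ∈ extRels B, G0 (A := A) a r = 0 := by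
  rintro r (((⟨x, y, h, rfl⟩ | ⟨p, q, u, v, h1, h2, hpu, hpv, hqu, hqv, rfl⟩) |
    ⟨p, q, u, hab, hbc, hac, rfl⟩) | ⟨x, g, rfl⟩)
  · rw [map_sub, G0_of, G0_of]
    show ttcl (Sum.inr x) (Sum.inr y) _ - ttcl (Sum.inr y) (Sum.inr x) _ = 0
    rw [ttcl_symm (Sum.inr x) (Sum.inr y), sub_self]
  · rw [LieHom.map_lie, G0_of, G0_of]
    exact tt_comm _ _ (fun hh => hpu (Sum.inr_injective hh))
      (fun hh => hpv (Sum.inr_injective hh)) (fun hh => hqu (Sum.inr_injective hh))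
      (fun hh => hqv (Sum.inr_injective hh))
  · rw [LieHom.map_lie, map_add, G0_of, G0_of, G0_of]
    exact tt_rel3 _ _ _
  · rw [LieHom.map_lie, G0_of]
    exact scl_central _ _

lemma F_rels : ∀ r ∈ extRels A, F0 (B := B) a r = 0 := by
  rintro r (((⟨x, y, h, rfl⟩ | ⟨p, q, u, v, h1, h2, hpu, hpv, hqu, hqv, rfl⟩) |
    ⟨p, q, u, hab, hbc, hac, rfl⟩) | ⟨x, g, rfl⟩)
  · rw [map_sub, F0_of, F0_of, FA_t_symm, sub_self]
  · -- commutation relation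
    rw [LieHom.map_lie, F0_of, F0_of]
    by_cases hp : p = a
    · have hq2 : q ≠ a := fun h' => h1 (hp.trans h'.symm)
      have hu2 : u ≠ a := fun h' => hpu (hp.trans h'.symm)
      have hv2 : v ≠ a := fun h' => hpv (hp.trans h'.symm)
      rw [FA_t_aL a hp hq2 h1, FA_t_ne a hu2 hv2 h2]
      exact HelperA a q u v hq2 hu2 hv2 hqu hqv h2
    · by_cases hq : q = a
      · have hu2 : u ≠ a := fun h' => hqu (hq.trans h'.symm)
        have hv2 : v ≠ a := fun h' => hqv (hq.trans h'.symm)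
        rw [FA_t_aR a hp hq h1, FA_t_ne a hu2 hv2 h2]
        exact HelperA a p u v hp hu2 hv2 hpu hpv h2
      · by_cases hu : u = a
        · have hv2 : v ≠ a := fun h' => h2 (hu.trans h'.symm)
          rw [← lie_skew, FA_t_aL a hu hv2 h2, FA_t_ne a hp hq h1]
          rw [HelperA a v p q hv2 hp hq (Ne.symm hpv) (Ne.symm hqv) h1, neg_zero]
        · by_cases hv : v = a
          · rw [← lie_skew, FA_t_aR a hu hv h2, FA_t_ne a hp hq h1]
            rw [HelperA a u p q hu hp hq (Ne.symm hpu) (Ne.symm hqu) h1, neg_zero]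
          · rw [FA_t_ne a hp hq h1, FA_t_ne a hu hv h2]
            exact tt_comm _ _ (inlne hpu) (inlne hpv) (inlne hqu) (inlne hqv)
  · -- infinitesimal braid relation
    rw [LieHom.map_lie, map_add, F0_of, F0_of, F0_of]
    by_cases hp : p = a
    · have hq2 : q ≠ a := fun h' => hab (hp.trans h'.symm)
      have hu2 : u ≠ a := fun h' => hac (hp.trans h'.symm)
      rw [FA_t_aL a hp hu2 hac, FA_t_aL a hp hq2 hab, FA_t_ne a hq2 hu2 hbc]
      exact H3a Sum.inr Sum.inr_injective _ _ (fun b => Sum.inl_ne_inr)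
        (fun b => Sum.inl_ne_inr) (inlne hbc)
    · by_cases hq : q = a
      · have hu2 : u ≠ a := fun h' => hbc (hq.trans h'.symm)
        rw [FA_t_ne a hp hu2 hac, FA_t_aR a hp hq hab, FA_t_aL a hq hu2 hbc]
        exact H3b Sum.inr _ _ (fun b => Sum.inl_ne_inr) (fun b => Sum.inl_ne_inr)
          (inlne hac)
      · by_cases hu : u = a
        · rw [FA_t_aR a hp hu hac, FA_t_ne a hp hq hab, FA_t_aR a hq hu hbc]
          exact H3c Sum.inr Sum.inr_injective _ _ (fun b => Sum.inl_ne_inr)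
            (fun b => Sum.inl_ne_inr) (inlne hab)
        · rw [FA_t_ne a hp hu hac, FA_t_ne a hp hq hab, FA_t_ne a hq hu hbc]
          exact tt_rel3 _ _ _
  · -- centrality of s
    rw [LieHom.map_lie, F0_of, F0_of]
    by_cases hx : x = a
    · rw [FA_s_a a hx, add_lie]
      have h1 : ⁅∑ b : B, scl (Sum.inr b : {x : A // x ≠ a} ⊕ B), FA (B := B) a g⁆ = 0 := by
        rw [sum_lie']
        exact Finset.sum_eq_zero (fun b _ => scl_central _ _)
      rw [h1, zero_add]
      cases g with
      | t y z hyz =>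
        by_cases hy : y = a
        · have hz2 : z ≠ a := fun h' => hyz (hy.trans h'.symm)
          rw [FA_t_aL a hy hz2 hyz]
          exact H4 Sum.inr Sum.inr_injective _ (fun b => Sum.inl_ne_inr)
        · by_cases hz : z = a
          · rw [FA_t_aR a hy hz hyz]
            exact H4 Sum.inr Sum.inr_injective _ (fun b => Sum.inl_ne_inr)
          · rw [FA_t_ne a hy hz hyz]
            exact H_outer Sum.inr Sum.inr_injective _ _ (fun b => Sum.inl_ne_inr)
              (fun b => Sum.inl_ne_inr) (inlne hyz)
      | s y =>
        by_cases hy : y = a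
        · rw [FA_s_a a hy, lie_add, lie_self, add_zero, lie_sum']
          exact Finset.sum_eq_zero (fun b _ => lie_scl_zero _ _)
        · rw [FA_s_ne a hy]
          exact lie_scl_zero _ _
    · rw [FA_s_ne a hx]
      exact scl_central _ _

lemma cross1 (g : ExtGen A) (h : ExtGen B) :
    ⁅F0 (B := B) a (of ℚ g), G0 (A := A) a (of ℚ h)⁆ = 0 := by
  rw [F0_of, G0_of]
  cases h with
  | s y => exact lie_scl_zero _ _
  | t u v huv =>
    show ⁅FA a g, ttcl (Sum.inr u : {x : A // x ≠ a} ⊕ B) (Sum.inr v) _⁆ = 0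
    cases g with
    | s x =>
      by_cases hx : x = a
      · rw [FA_s_a a hx, add_lie]
        have h1 : ⁅∑ b : B, scl (Sum.inr b : {x : A // x ≠ a} ⊕ B),
            ttcl (Sum.inr u : {x : A // x ≠ a} ⊕ B) (Sum.inr v)
              (fun hh => huv (Sum.inr_injective hh))⁆ = 0 := by
          rw [sum_lie']
          exact Finset.sum_eq_zero (fun b _ => scl_central _ _)
        rw [h1, zero_add]
        exact H5 Sum.inr Sum.inr_injective u v huv
      · rw [FA_s_ne a hx]
        exact scl_central _ _
    | t x y hxy =>
      by_cases hx : x = a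
      · have hy2 : y ≠ a := fun h' => hxy (hx.trans h'.symm)
        rw [FA_t_aL a hx hy2 hxy]
        exact H6 Sum.inr Sum.inr_injective _ (fun b => Sum.inl_ne_inr) u v huv
      · by_cases hy : y = a
        · rw [FA_t_aR a hx hy hxy]
          exact H6 Sum.inr Sum.inr_injective _ (fun b => Sum.inl_ne_inr) u v huv
        · rw [FA_t_ne a hx hy hxy]
          exact tt_comm _ _ Sum.inl_ne_inr Sum.inl_ne_inr Sum.inl_ne_inr Sum.inl_ne_inr

lemma cross_full (x : FreeLieAlgebra ℚ (ExtGen A)) (y : FreeLieAlgebra ℚ (ExtGen B)) :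
    ⁅F0 (B := B) a x, G0 (A := A) a y⁆ = 0 := by
  have step2 : ∀ (g : ExtGen A) (y : FreeLieAlgebra ℚ (ExtGen B)),
      ⁅F0 (B := B) a (of ℚ g), G0 (A := A) a y⁆ = 0 := by
    intro g y
    have hy : y ∈ (centraL (F0 (B := B) a (of ℚ g))).comap (G0 (A := A) a) :=
      mem_of_forall_of _ (fun h => cross1 a g h) y
    exact hy
  have hx : x ∈ (centra (G0 (A := A) a y)).comap (F0 (B := B) a) :=
    mem_of_forall_of _ (fun g => step2 g y) x
  exact hx

/-- The first component of the insertion, descended to the quotient. -/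
noncomputable def Fq : DKtTilde A →ₗ⁅ℚ⁆ DKtTilde ({x : A // x ≠ a} ⊕ B) :=
  quotLift (F0 a) (F_rels a)

/-- The second component of the insertion, descended to the quotient. -/
noncomputable def Gq : DKtTilde B →ₗ⁅ℚ⁆ DKtTilde ({x : A // x ≠ a} ⊕ B) :=
  quotLift (G0 a) (G_rels a)

lemma crossq : ∀ (x : DKtTilde A) (y : DKtTilde B), ⁅Fq (B := B) a x, Gq (A := A) a y⁆ = 0 := by
  intro x y
  obtain ⟨x, rfl⟩ := Submodule.Quotient.mk_surjective (extIdeal A).toSubmodule x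
  obtain ⟨y, rfl⟩ := Submodule.Quotient.mk_surjective (extIdeal B).toSubmodule y
  show ⁅F0 (B := B) a x, G0 (A := A) a y⁆ = 0
  exact cross_full a x y

end Main

/-- the operadic insertion exists, i.e. there is a Lie algebra
homomorphism `∘_a : t̃_A × t̃_B → t̃_{(A−{a}) ⊔ B}` taking the prescribed values on
the classes of the generators. -/
theorem insertion_exists (A B : Type) [Fintype A] [Fintype B] [DecidableEq A]
    [DecidableEq B] (a : A) :
    ∃ f : DKtTilde A × DKtTilde B →ₗ⁅ℚ⁆ DKtTilde ({x : A // x ≠ a} ⊕ B),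
      IsInsertion A B a f := by
  refine ⟨combine (Fq a) (Gq a) (crossq a), ?_, ?_, ?_, ?_, ?_, ?_⟩
  · intro x y hx hy hxy
    show Fq a (ttcl x y hxy) + Gq (A := A) a 0 = _
    rw [map_zero, add_zero]
    have e1 : Fq (B := B) a (ttcl x y hxy) = FA (B := B) a (ExtGen.t x y hxy) := by
      show F0 (B := B) a (FreeLieAlgebra.of ℚ (ExtGen.t x y hxy)) = _
      rw [F0_of]
    rw [e1, FA_t_ne a hx hy hxy]
  · intro x hx
    show Fq a (scl x) + Gq (A := A) a 0 = _
    rw [map_zero, add_zero]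
    have e1 : Fq (B := B) a (scl x) = FA (B := B) a (ExtGen.s x) := by
      show F0 (B := B) a (FreeLieAlgebra.of ℚ (ExtGen.s x)) = _
      rw [F0_of]
    rw [e1, FA_s_ne a hx]
  · intro x y hxy
    show Fq (B := B) a 0 + Gq a (ttcl x y hxy) = _
    rw [map_zero, zero_add]
    show G0 (A := A) a (FreeLieAlgebra.of ℚ (ExtGen.t x y hxy)) = _
    rw [G0_of]
    rfl
  · intro x
    show Fq (B := B) a 0 + Gq a (scl x) = _
    rw [map_zero, zero_add]
    show G0 (A := A) a (FreeLieAlgebra.of ℚ (ExtGen.s x)) = _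
    rw [G0_of]
    rfl
  · intro x hx hax
    show Fq a (ttcl a x hax) + Gq (A := A) a 0 = _
    rw [map_zero, add_zero]
    have e1 : Fq (B := B) a (ttcl a x hax) = FA (B := B) a (ExtGen.t a x hax) := by
      show F0 (B := B) a (FreeLieAlgebra.of ℚ (ExtGen.t a x hax)) = _
      rw [F0_of]
    rw [e1, FA_t_aL a rfl hx hax]
  · show Fq a (scl a) + Gq (A := A) a 0 = _
    rw [map_zero, add_zero]
    have e1 : Fq (B := B) a (scl a) = FA (B := B) a (ExtGen.s a) := by
      show F0 (B := B) a (FreeLieAlgebra.of ℚ (ExtGen.s a)) = _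
      rw [F0_of]
    rw [e1, FA_s_a a rfl]
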